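/- Concatenation construction: Let C be a set of vectors of length n over {0,...,q-1} such that any two distinct elements have Hamming distance at least d. For each c ∈ C form the length-2n vector c|(q-1-c) obtained by appending the complement of c to c. Then for any two distinct codewords u = c|(q-1-c) and v = c'|(q-1-c') of the resulting code, both N(u,v) ≥ d and N(v,u) ≥ d. -/

import Mathlib

/-- `Ncount x y` is the number of positions where `x` exceeds `y`. -/
def Ncount {n q : ℕ} (x y : Fin n → Fin q) : ℕ :=
  (Finset.univ.filter fun i => y i < x i).card

lemma aux_ncount {q n d : ℕ} (c c' : Fin n → Fin q)
    (hd : d ≤ (Finset.univ.filter fun i => c i ≠ c' i).card) :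
    d ≤ Ncount (Fin.append c fun i => (c i).rev) (Fin.append c' fun i => (c' i).rev) := by
  refine hd.trans (Finset.card_le_card_of_injOn
    (fun i => if c' i < c i then Fin.castAdd n i else Fin.natAdd n i) ?_ ?_)
  · intro i hi
    simp only [Finset.mem_coe, Finset.mem_filter, Finset.mem_univ, true_and] at hi ⊢
    by_cases h : c' i < c i
    · simpa [h, Fin.append_left] using h
    · have : c i < c' i := lt_of_le_of_ne (not_lt.mp h) hi
      simp only [h, if_false, Fin.append_right, Fin.rev_lt_rev]
      exact this
  · intro i _ j _ hij
    by_cases hi : c' i < c i <;> by_cases hj : c' j < c j <;>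
      simp only [hi, hj, if_true, if_false] at hij <;>
      · have := congrArg Fin.val hij
        simp at this
        omega

theorem stmt2 {q n d : ℕ} (hq : 1 ≤ q) (C : Set (Fin n → Fin q))
    (hC : ∀ c ∈ C, ∀ c' ∈ C, c ≠ c' →
      d ≤ (Finset.univ.filter fun i => c i ≠ c' i).card)
    (c : Fin n → Fin q) (hc : c ∈ C) (c' : Fin n → Fin q) (hc' : c' ∈ C)
    (hne : c ≠ c') :
    d ≤ Ncount (Fin.append c fun i => (c i).rev) (Fin.append c' fun i => (c' i).rev) ∧
    d ≤ Ncount (Fin.append c' fun i => (c' i).rev) (Fin.append c fun i => (c i).rev) := by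
  constructor
  · exact aux_ncount c c' (hC c hc c' hc' hne)
  · have : (Finset.univ.filter fun i => c' i ≠ c i) =
        (Finset.univ.filter fun i => c i ≠ c' i) := by
      ext i; simp [ne_comm]
    exact aux_ncount c' c (this ▸ hC c hc c' hc' hne)
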